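/- Let (Ω, 𝓕, P) be a probability space, E ∈ 𝓕 an event, and R : Ω → ℝ a measurable random variable whose law has density g with respect to Lebesgue measure. Let f_u : ℝ → ℝ be a nonnegative measurable function such that P[1_E | σ(R)] ≤ f_u ∘ R P-almost everywhere. Then for every Lebesgue-measurable set A ⊆ ℝ, P(E) ≤ ∫_A f_u(r) g(r) dr + ∫_{ℝ \ A} g(r) dr, where the integrals are Lebesgue integrals of nonnegative functions (possibly +∞). -/

import Mathlib

open MeasureTheory

/-- Theorem 2 (first inequality): the GFBT with an arbitrary Lebesgue-measurable
parameter set `A`: `P(E) ≤ ∫_A f_u g + ∫_{ℝ \ A} g`. -/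
theorem stmt6
    {Ω : Type*} [MeasurableSpace Ω] (P : Measure Ω) [IsProbabilityMeasure P]
    (E : Set Ω) (hE : MeasurableSet E)
    (R : Ω → ℝ) (hR : Measurable R)
    (g : ℝ → ℝ) (hg0 : ∀ r, 0 ≤ g r) (hgmeas : Measurable g)
    (hg1 : ∫⁻ r, ENNReal.ofReal (g r) = 1)
    (hlaw : P.map R = volume.withDensity (fun r => ENNReal.ofReal (g r)))
    (f_u : ℝ → ℝ) (hf0 : ∀ r, 0 ≤ f_u r) (hfmeas : Measurable f_u)
    (hce : ∀ᵐ ω ∂P,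
      MeasureTheory.condExp (MeasurableSpace.comap R Real.measurableSpace) P
        (E.indicator fun _ => (1 : ℝ)) ω ≤ f_u (R ω))
    (A : Set ℝ) (hA : MeasurableSet A) :
    P E ≤ (∫⁻ r in A, ENNReal.ofReal (f_u r) * ENNReal.ofReal (g r)) +
      ∫⁻ r in Aᶜ, ENNReal.ofReal (g r) := by
  have hm : MeasurableSpace.comap R Real.measurableSpace ≤ ‹MeasurableSpace Ω› :=
    hR.comap_le
  set S : Set Ω := R ⁻¹' A with hS_def
  have hSm : MeasurableSet[MeasurableSpace.comap R Real.measurableSpace] S := ⟨A, hA, rfl⟩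
  have hS : MeasurableSet S := hm _ hSm
  -- split
  have hsplit : P E = P (E ∩ S) + P (E ∩ Sᶜ) := by
    rw [← Set.diff_eq, measure_inter_add_diff E hS]
  rw [hsplit]
  -- second bound
  have h2 : P (E ∩ Sᶜ) ≤ ∫⁻ r in Aᶜ, ENNReal.ofReal (g r) := by
    have hle : P (E ∩ Sᶜ) ≤ P Sᶜ := measure_mono Set.inter_subset_right
    refine hle.trans_eq ?_
    have heq : P Sᶜ = P.map R Aᶜ := by
      rw [Measure.map_apply hR hA.compl]; rfl
    rw [heq, hlaw, withDensity_apply _ hA.compl]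
  -- first bound
  have h1 : P (E ∩ S) ≤ ∫⁻ r in A, ENNReal.ofReal (f_u r) * ENNReal.ofReal (g r) := by
    have hrhs : (∫⁻ r in A, ENNReal.ofReal (f_u r) * ENNReal.ofReal (g r))
        = ∫⁻ ω in S, ENNReal.ofReal (f_u (R ω)) ∂P := by
      rw [hS_def, ← setLIntegral_map hA (hfmeas.ennreal_ofReal) hR, hlaw,
        setLIntegral_withDensity_eq_setLIntegral_mul _ hgmeas.ennreal_ofReal
          hfmeas.ennreal_ofReal hA]
      simp [mul_comm]
    rw [hrhs]
    by_cases hfin : (∫⁻ ω in S, ENNReal.ofReal (f_u (R ω)) ∂P) = ⊤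
    · exact hfin ▸ le_top
    -- f_u ∘ R integrable on S
    have hInt : IntegrableOn (fun ω => f_u (R ω)) S P := by
      refine ⟨(hfmeas.comp hR).aestronglyMeasurable.restrict, ?_⟩
      rw [hasFiniteIntegral_iff_norm]
      have heq : (∫⁻ ω in S, ENNReal.ofReal ‖f_u (R ω)‖ ∂P)
          = ∫⁻ ω in S, ENNReal.ofReal (f_u (R ω)) ∂P := by
        congr 1; ext ω; rw [Real.norm_of_nonneg (hf0 _)]
      rw [heq]; exact lt_top_iff_ne_top.mpr hfin
    haveI : IsFiniteMeasure (P.trim hm) := isFiniteMeasure_trim hm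
    have hIndInt : Integrable (E.indicator fun _ => (1 : ℝ)) P :=
      (integrable_const (1 : ℝ)).indicator hE
    have hmeas_eq : P (E ∩ S)
        = ENNReal.ofReal (∫ ω in S, E.indicator (fun _ => (1:ℝ)) ω ∂P) := by
      rw [setIntegral_indicator hE, setIntegral_const, smul_eq_mul, mul_one,
        measureReal_def, ENNReal.ofReal_toReal (measure_ne_top _ _), Set.inter_comm]
    rw [hmeas_eq]
    have hstep1 : (∫ ω in S, E.indicator (fun _ => (1:ℝ)) ω ∂P)
        = ∫ ω in S,
            MeasureTheory.condExp (MeasurableSpace.comap R Real.measurableSpace) P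
              (E.indicator fun _ => (1 : ℝ)) ω ∂P :=
      (setIntegral_condExp hm hIndInt hSm).symm
    have hstep2 : (∫ ω in S,
          MeasureTheory.condExp (MeasurableSpace.comap R Real.measurableSpace) P
            (E.indicator fun _ => (1 : ℝ)) ω ∂P)
        ≤ ∫ ω in S, f_u (R ω) ∂P :=
      setIntegral_mono_ae integrable_condExp.integrableOn hInt hce
    have hstep3 : ENNReal.ofReal (∫ ω in S, f_u (R ω) ∂P)
        = ∫⁻ ω in S, ENNReal.ofReal (f_u (R ω)) ∂P :=
      ofReal_integral_eq_lintegral_ofReal hInt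
        (Filter.Eventually.of_forall fun ω => hf0 _)
    calc ENNReal.ofReal (∫ ω in S, E.indicator (fun _ => (1:ℝ)) ω ∂P)
        ≤ ENNReal.ofReal (∫ ω in S, f_u (R ω) ∂P) :=
          ENNReal.ofReal_le_ofReal (hstep1 ▸ hstep2)
      _ = _ := hstep3
  exact add_le_add h1 h2
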